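/- Let n = 3 and let (L,p) ∈ so(3) × ℝ³ satisfy L p = 0 with L ≠ 0 and p ≠ 0. Then the coadjoint orbit of E(3) through (L,p), equipped with the subspace topology from so(3) × ℝ³, is homeomorphic to the disjoint union (topological sum) of two copies of the set {(u,w) ∈ ℝ³ × ℝ³ : ‖u‖ = 1 and ⟨u,w⟩ = 0} (i.e. to two disjoint copies of the tangent bundle of the 2-sphere). -/

import Mathlib

open Matrix

abbrev Mat (n : ℕ) := Matrix (Fin n) (Fin n) ℝ
abbrev Vec (n : ℕ) := Fin n → ℝ

/-- `r` is an orthogonal matrix. -/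
def IsOrth {n : ℕ} (r : Mat n) : Prop := r * rᵀ = 1 ∧ rᵀ * r = 1

/-- `ω` is skew-symmetric. -/
def IsSkew {n : ℕ} (ω : Mat n) : Prop := ωᵀ = -ω

/-- Adjoint action of `(r,d) ∈ E(n)` on `(ω,v) ∈ so(n) × ℝⁿ`. -/
noncomputable def Ad {n : ℕ} (r : Mat n) (d : Vec n) (ω : Mat n) (v : Vec n) :
    Mat n × Vec n :=
  (r * ω * r⁻¹, r *ᵥ v - (r * ω * r⁻¹) *ᵥ d)

/-- The momentum map `μ(p,d) = ½(p dᵀ − d pᵀ)`. -/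
noncomputable def mu {n : ℕ} (p d : Vec n) : Mat n :=
  (1/2 : ℝ) • (vecMulVec p d - vecMulVec d p)

/-- Coadjoint action of `(r,d) ∈ E(n)` on `(L,p) ∈ so(n)* × (ℝⁿ)* ≃ so(n) × ℝⁿ`. -/
noncomputable def CoAd {n : ℕ} (r : Mat n) (d : Vec n) (L : Mat n) (p : Vec n) :
    Mat n × Vec n :=
  (r * L * r⁻¹ + mu (r *ᵥ p) d, r *ᵥ p)

namespace St19

def hat (v : Vec 3) : Mat 3 := !![0, -v 2, v 1; v 2, 0, -v 0; -v 1, v 0, 0]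
def ax (M : Mat 3) : Vec 3 := ![M 2 1, M 0 2, M 1 0]
def cr (a b : Vec 3) : Vec 3 :=
  ![a 1 * b 2 - a 2 * b 1, a 2 * b 0 - a 0 * b 2, a 0 * b 1 - a 1 * b 0]

lemma ax_hat (v : Vec 3) : ax (hat v) = v := by
  funext i; fin_cases i <;> simp [ax, hat]

lemma hat_zero : hat 0 = 0 := by
  ext i j; fin_cases i <;> fin_cases j <;>
    simp [hat, Matrix.vecHead, Matrix.vecTail]

lemma hat_add (a b : Vec 3) : hat (a + b) = hat a + hat b := by
  ext i j; fin_cases i <;> fin_cases j <;> simp [hat] <;> ring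

lemma hat_ax {M : Mat 3} (h : IsSkew M) : hat (ax M) = M := by
  have h' : ∀ i j, M j i = -M i j := fun i j => by
    have := congrFun (congrFun h i) j
    simpa [Matrix.transpose_apply] using this
  have hd : ∀ i, M i i = 0 := fun i => by have := h' i i; linarith
  ext i j
  fin_cases i <;> fin_cases j <;>
    simp [hat, ax, hd] <;> rw [h'] <;> ring_nf <;> simp [hd]

lemma hat_mulVec (v x : Vec 3) : hat v *ᵥ x = cr v x := by
  funext i; fin_cases i <;>
    simp [hat, cr, Matrix.mulVec, dotProduct, Fin.sum_univ_three] <;> ring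

lemma cr_smul_left (s : ℝ) (a b : Vec 3) : cr (s • a) b = s • cr a b := by
  funext i; fin_cases i <;> simp [cr] <;> ring

lemma cr_dot_self (a b : Vec 3) : cr a b ⬝ᵥ b = 0 := by
  simp [cr, dotProduct, Fin.sum_univ_three]; ring

lemma crcr (a b : Vec 3) : cr (cr a b) a = (a ⬝ᵥ a) • b - (b ⬝ᵥ a) • a := by
  funext i; fin_cases i <;>
    simp [cr, dotProduct, Fin.sum_univ_three] <;> ring

lemma lagrange (a b : Vec 3) :
    cr a b ⬝ᵥ cr a b = (a ⬝ᵥ a) * (b ⬝ᵥ b) - (a ⬝ᵥ b) ^ 2 := by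
  simp [cr, dotProduct, Fin.sum_univ_three]; ring

lemma mu_eq (q d : Vec 3) : mu q d = hat ((1/2 : ℝ) • cr d q) := by
  ext i j; fin_cases i <;> fin_cases j <;>
    simp [mu, hat, cr, Matrix.vecMulVec_apply] <;> ring

lemma dot_cr (y a b : Vec 3) : y ⬝ᵥ cr a b = Matrix.det (Matrix.of ![y, a, b]) := by
  simp [cr, dotProduct, Fin.sum_univ_three, Matrix.det_fin_three]; ring


lemma mat_ext {M N : Mat 3} (h : ∀ x, M *ᵥ x = N *ᵥ x) : M = N := by
  ext i j
  have := congrFun (h (Pi.single j 1)) i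
  simpa [Matrix.mulVec_single] using this

lemma orth_inv_eq {r : Mat 3} (h : IsOrth r) : r⁻¹ = rᵀ :=
  Matrix.inv_eq_right_inv h.1

lemma orth_det_pm {r : Mat 3} (h : IsOrth r) :
    Matrix.det r = 1 ∨ Matrix.det r = -1 := by
  have h1 : Matrix.det r * Matrix.det r = 1 := by
    have := congrArg Matrix.det h.1
    simpa [Matrix.det_mul, Matrix.det_transpose] using this
  exact mul_self_eq_one_iff.mp h1

lemma orth_det_mul_self {r : Mat 3} (h : IsOrth r) :
    Matrix.det r * Matrix.det r = 1 := by
  rcases orth_det_pm h with h' | h' <;> rw [h'] <;> ring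

lemma orth_dot_mulVec {r : Mat 3} (h : IsOrth r) (x y : Vec 3) :
    (r *ᵥ x) ⬝ᵥ (r *ᵥ y) = x ⬝ᵥ y := by
  rw [Matrix.dotProduct_mulVec, ← Matrix.transpose_transpose r,
    Matrix.vecMul_transpose, Matrix.transpose_transpose, Matrix.mulVec_mulVec,
    h.2, Matrix.one_mulVec]

lemma rows_mul (r : Mat 3) (y a b : Vec 3) :
    Matrix.of ![r *ᵥ y, r *ᵥ a, r *ᵥ b] = Matrix.of ![y, a, b] * rᵀ := by
  ext i j
  fin_cases i <;>
    simp [Matrix.mul_apply, Matrix.mulVec, dotProduct, Fin.sum_univ_three,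
      Matrix.transpose_apply] <;> ring

lemma orth_mulVec_cr {r : Mat 3} (h : IsOrth r) (a b : Vec 3) :
    r *ᵥ cr a b = Matrix.det r • cr (r *ᵥ a) (r *ᵥ b) := by
  set L := r *ᵥ cr a b with hLdef
  set R := Matrix.det r • cr (r *ᵥ a) (r *ᵥ b) with hRdef
  have key : ∀ y, (r *ᵥ y) ⬝ᵥ L = (r *ᵥ y) ⬝ᵥ R := by
    intro y
    have h1 : (r *ᵥ y) ⬝ᵥ L = Matrix.det (Matrix.of ![y, a, b]) := by
      rw [hLdef, orth_dot_mulVec h, dot_cr]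
    have h2 : (r *ᵥ y) ⬝ᵥ R = Matrix.det (Matrix.of ![y, a, b]) := by
      rw [hRdef, dotProduct_smul, dot_cr, rows_mul, Matrix.det_mul,
        Matrix.det_transpose, smul_eq_mul]
      have hd := orth_det_mul_self h
      linear_combination Matrix.det (Matrix.of ![y, a, b]) * hd
    rw [h1, h2]
  have h3 := key (rᵀ *ᵥ (L - R))
  rw [Matrix.mulVec_mulVec, h.1, Matrix.one_mulVec] at h3
  have h4 : (L - R) ⬝ᵥ (L - R) = 0 := by
    rw [dotProduct_sub, h3, sub_self]
  have h5 := dotProduct_self_eq_zero.mp h4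
  exact sub_eq_zero.mp h5
  
lemma conj {r : Mat 3} (h : IsOrth r) (v : Vec 3) :
    r * hat v * rᵀ = hat (Matrix.det r • (r *ᵥ v)) := by
  apply mat_ext
  intro x
  rw [← Matrix.mulVec_mulVec, ← Matrix.mulVec_mulVec, hat_mulVec, hat_mulVec,
    orth_mulVec_cr h, cr_smul_left]
  have : r *ᵥ rᵀ *ᵥ x = x := by
    rw [Matrix.mulVec_mulVec, h.1, Matrix.one_mulVec]
  rw [this]

/-- Householder reflection. -/
noncomputable def Hh (v : Vec 3) : Mat 3 :=
  1 - (2 / (v ⬝ᵥ v)) • vecMulVec v v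

lemma dot_self_ne {v : Vec 3} (hv : v ≠ 0) : v ⬝ᵥ v ≠ 0 :=
  fun h => hv (dotProduct_self_eq_zero.mp h)

lemma Hh_transpose (v : Vec 3) : (Hh v)ᵀ = Hh v := by
  ext i j
  simp only [Hh, Matrix.transpose_apply, Matrix.sub_apply, Matrix.smul_apply,
    Matrix.vecMulVec_apply, Matrix.one_apply, smul_eq_mul]
  by_cases hij : i = j
  · simp [hij]
  · simp only [hij, Ne.symm hij, if_false]
    ring

lemma Hh_mul_self {v : Vec 3} (hv : v ≠ 0) : Hh v * Hh v = 1 := by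
  have hs := dot_self_ne hv
  have hvv : vecMulVec v v * vecMulVec v v = (v ⬝ᵥ v) • vecMulVec v v := by
    ext i j
    simp [Matrix.mul_apply, Matrix.vecMulVec_apply, dotProduct,
      Fin.sum_univ_three]
    ring
  set s := v ⬝ᵥ v with hsdef
  set V := vecMulVec v v with hV
  have expand : Hh v * Hh v = 1 - (2 * (2/s)) • V + ((2/s) * (2/s) * s) • V := by
    simp only [Hh, Matrix.sub_mul, Matrix.mul_sub, Matrix.one_mul, Matrix.mul_one,
      Matrix.smul_mul, Matrix.mul_smul, ← hV, ← hsdef, hvv, smul_smul]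
    module
  have hc : (2/s) * (2/s) * s = 2 * (2/s) := by field_simp
  rw [expand, hc, sub_add_cancel]

lemma Hh_orth {v : Vec 3} (hv : v ≠ 0) : IsOrth (Hh v) :=
  ⟨by rw [Hh_transpose]; exact Hh_mul_self hv, by rw [Hh_transpose]; exact Hh_mul_self hv⟩

lemma Hh_mulVec (v x : Vec 3) :
    Hh v *ᵥ x = x - (2 * (v ⬝ᵥ x) / (v ⬝ᵥ v)) • v := by
  funext i
  fin_cases i <;>
    simp [Hh, Matrix.sub_mulVec, Matrix.one_mulVec, Matrix.smul_mulVec,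
      Matrix.mulVec, Matrix.vecMulVec_apply, dotProduct, Fin.sum_univ_three,
      Matrix.one_apply] <;> ring

lemma Hh_det {v : Vec 3} (hv : v ≠ 0) : Matrix.det (Hh v) = -1 := by
  have hs : v ⬝ᵥ v ≠ 0 := dot_self_ne hv
  have hs' : v 0 * v 0 + v 1 * v 1 + v 2 * v 2 ≠ 0 := by
    simpa [dotProduct, Fin.sum_univ_three] using hs
  simp [Hh, Matrix.det_fin_three, Matrix.sub_apply, Matrix.smul_apply,
    Matrix.one_apply, Matrix.vecMulVec_apply, dotProduct, Fin.sum_univ_three]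
  have hs2 : v 0 ^ 2 + v 1 ^ 2 + v 2 ^ 2 ≠ 0 := by simpa [sq] using hs'
  field_simp
  ring

lemma exists_orth {p : Vec 3} (hp : p ≠ 0) (q : Vec 3) (hq : q ⬝ᵥ q = p ⬝ᵥ p)
    (δ : ℝ) (hδ : δ = 1 ∨ δ = -1) :
    ∃ r : Mat 3, IsOrth r ∧ r *ᵥ p = q ∧ Matrix.det r = δ := by
  -- a reflection fixing q
  have hq0 : q ≠ 0 := by
    intro h
    apply dot_self_ne hp
    rw [← hq, h]; simp
  obtain ⟨v₀, hv₀, hv₀q⟩ : ∃ v₀ : Vec 3, v₀ ≠ 0 ∧ v₀ ⬝ᵥ q = 0 := by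
    by_cases h01 : q 0 = 0 ∧ q 1 = 0
    · refine ⟨![1, 0, 0], ?_, ?_⟩
      · intro h; have := congrFun h 0; simp at this
      · simp [dotProduct, Fin.sum_univ_three, h01.1]
    · refine ⟨![-q 1, q 0, 0], ?_, ?_⟩
      · intro h
        apply h01
        constructor
        · have := congrFun h 1; simpa using this
        · have := congrFun h 0; simpa using this
      · simp [dotProduct, Fin.sum_univ_three]; ring
  have hfix : Hh v₀ *ᵥ q = q := by
    rw [Hh_mulVec, hv₀q]; simp
  -- a first orthogonal map sending p to q
  obtain ⟨r₁, hr₁, hr₁p, hr₁d⟩ : ∃ r₁ : Mat 3, IsOrth r₁ ∧ r₁ *ᵥ p = q ∧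
      (Matrix.det r₁ = 1 ∨ Matrix.det r₁ = -1) := by
    by_cases hpq : p = q
    · exact ⟨1, ⟨by simp, by simp⟩, by simp [hpq], Or.inl (by simp)⟩
    · have hv : p - q ≠ 0 := sub_ne_zero.mpr hpq
      refine ⟨Hh (p - q), Hh_orth hv, ?_, Or.inr (Hh_det hv)⟩
      rw [Hh_mulVec]
      have h1 : (p - q) ⬝ᵥ (p - q) = 2 * ((p - q) ⬝ᵥ p) := by
        have hcomm : p ⬝ᵥ q = q ⬝ᵥ p := dotProduct_comm p q
        simp only [sub_dotProduct, dotProduct_sub]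
        linarith [hq]
      rw [h1]
      have h2 : (p - q) ⬝ᵥ p ≠ 0 := by
        intro h
        rw [h, mul_zero] at h1
        exact hv (dotProduct_self_eq_zero.mp h1)
      have h3 : 2 * ((p - q) ⬝ᵥ p) ≠ 0 := mul_ne_zero two_ne_zero h2
      rw [div_self h3, one_smul]
      abel
  -- adjust the determinant
  by_cases hdet : Matrix.det r₁ = δ
  · exact ⟨r₁, hr₁, hr₁p, hdet⟩
  · refine ⟨Hh v₀ * r₁, ?_, ?_, ?_⟩
    · constructor
      · rw [Matrix.transpose_mul, Hh_transpose, Matrix.mul_assoc,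
          ← Matrix.mul_assoc r₁, hr₁.1, Matrix.one_mul, Hh_mul_self hv₀]
      · rw [Matrix.transpose_mul, Hh_transpose, Matrix.mul_assoc,
          ← Matrix.mul_assoc (Hh v₀), Hh_mul_self hv₀, Matrix.one_mul, hr₁.2]
    · rw [← Matrix.mulVec_mulVec, hr₁p, hfix]
    · rw [Matrix.det_mul, Hh_det hv₀]
      rcases hr₁d with h | h <;> rcases hδ with h' | h' <;>
        rw [h] at hdet ⊢ <;> simp_all <;> linarith

def Sset (c : ℝ) (p : Vec 3) (δ : ℝ) : Set (Mat 3 × Vec 3) :=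
  {x | hat (ax x.1) = x.1 ∧ x.2 ⬝ᵥ x.2 = p ⬝ᵥ p ∧ ax x.1 ⬝ᵥ x.2 = δ * (c * (p ⬝ᵥ p))}

lemma orbit_eq (p : Vec 3) (hp : p ≠ 0) (c : ℝ) :
    {x : Mat 3 × Vec 3 | ∃ r d, IsOrth r ∧ CoAd r d (hat (c • p)) p = x}
      = Sset c p 1 ∪ Sset c p (-1) := by
  ext x
  constructor
  · rintro ⟨r, d, hr, rfl⟩
    have hq : (r *ᵥ p) ⬝ᵥ (r *ᵥ p) = p ⬝ᵥ p := orth_dot_mulVec hr p p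
    have hM : CoAd r d (hat (c • p)) p =
        (hat (Matrix.det r • (c • (r *ᵥ p)) + (1/2 : ℝ) • cr d (r *ᵥ p)), r *ᵥ p) := by
      unfold CoAd
      rw [orth_inv_eq hr, conj hr, mu_eq, ← hat_add, Matrix.mulVec_smul]
    rw [hM]
    set q := r *ᵥ p with hqdef
    set m := Matrix.det r • (c • q) + (1/2:ℝ) • cr d q with hm
    have h3 : m ⬝ᵥ q = Matrix.det r * (c * (p ⬝ᵥ p)) := by
      simp only [hm, add_dotProduct, smul_dotProduct, cr_dot_self,
        smul_eq_mul, hq, mul_zero, add_zero]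
    rcases orth_det_pm hr with h | h
    · left
      refine ⟨by rw [ax_hat], hq, ?_⟩
      rw [ax_hat, h3, h]
    · right
      refine ⟨by rw [ax_hat], hq, ?_⟩
      rw [ax_hat, h3, h]
  · have H : ∀ δ, (δ = 1 ∨ δ = -1) → x ∈ Sset c p δ →
        x ∈ {x : Mat 3 × Vec 3 | ∃ r d, IsOrth r ∧ CoAd r d (hat (c • p)) p = x} := by
      rcases x with ⟨M, q⟩
      rintro δ hδ ⟨h1, h2, h3⟩
      simp only [Set.mem_setOf_eq] at h1 h2 h3 ⊢
      have hqq : q ⬝ᵥ q ≠ 0 := by rw [h2]; exact dot_self_ne hp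
      set m := ax M with hmdef
      set w := m - (δ * c) • q with hw
      have hwq : w ⬝ᵥ q = 0 := by
        rw [hw, sub_dotProduct, smul_dotProduct, h3, h2, smul_eq_mul]
        ring
      set d := (2 / (q ⬝ᵥ q)) • cr q w with hd
      obtain ⟨r, hr, hrp, hrdet⟩ := exists_orth hp q h2 δ hδ
      refine ⟨r, d, hr, ?_⟩
      have e1 : r *ᵥ (c • p) = c • q := by rw [Matrix.mulVec_smul, hrp]
      have hcr : (1/2:ℝ) • cr d q = w := by
        rw [hd, cr_smul_left, crcr, hwq, zero_smul, sub_zero, smul_smul, smul_smul]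
        have h' : q 0 * q 0 + q 1 * q 1 + q 2 * q 2 ≠ 0 := by
          simpa [dotProduct, Fin.sum_univ_three] using hqq
        rw [show (1/2:ℝ) * (2 / (q ⬝ᵥ q)) * (q ⬝ᵥ q) = 1 by field_simp, one_smul]
      unfold CoAd
      rw [orth_inv_eq hr, conj hr, e1, hrdet, mu_eq, ← hat_add, hrp]
      have e2 : δ • c • q + (1/2:ℝ) • cr d q = ax M := by
        rw [hcr, hw, smul_smul]
        abel
      rw [e2, h1]
    rintro (hx | hx)
    · exact H 1 (Or.inl rfl) hx
    · exact H (-1) (Or.inr rfl) hx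

lemma Sset_closed (c : ℝ) (p : Vec 3) (δ : ℝ) : IsClosed (Sset c p δ) := by
  have base : ∀ i j : Fin 3, Continuous fun x : Mat 3 × Vec 3 => x.1 i j := by
    intro i j
    fun_prop
  have hc1 : Continuous fun x : Mat 3 × Vec 3 => ax x.1 := by
    apply continuous_pi
    intro i
    fin_cases i
    · simpa [ax] using base 2 1
    · simpa [ax] using base 0 2
    · simpa [ax] using base 1 0
  have hc2 : Continuous fun x : Mat 3 × Vec 3 => x.2 := continuous_snd
  have hhat : Continuous (hat : Vec 3 → Mat 3) := by
    apply continuous_pi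
    intro i
    apply continuous_pi
    intro j
    fin_cases i <;> fin_cases j <;> simp [hat] <;>
      first
        | exact continuous_const
        | exact continuous_apply _
        | exact (continuous_apply _).neg
  have hdot : ∀ (f g : (Mat 3 × Vec 3) → Vec 3), Continuous f → Continuous g →
      Continuous fun x => f x ⬝ᵥ g x := by
    intro f g hf hg
    simp only [dotProduct, Fin.sum_univ_three]
    have hfi : ∀ i, Continuous fun x => f x i := fun i => (continuous_apply i).comp hf
    have hgi : ∀ i, Continuous fun x => g x i := fun i => (continuous_apply i).comp hg
    exact (((hfi 0).mul (hgi 0)).add ((hfi 1).mul (hgi 1))).add ((hfi 2).mul (hgi 2))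
  apply IsClosed.inter
  · exact isClosed_eq (hhat.comp hc1) continuous_fst
  apply IsClosed.inter
  · exact isClosed_eq (hdot _ _ hc2 hc2) continuous_const
  · exact isClosed_eq (hdot _ _ hc1 hc2) continuous_const

lemma union_homeo {Z : Type*} [TopologicalSpace Z] {A B : Set Z}
    (hA : IsClosed A) (hB : IsClosed B) (hAB : ∀ z, z ∈ A → z ∈ B → False) :
    Nonempty (↥(A ∪ B) ≃ₜ ↥A ⊕ ↥B) := by
  classical
  set f : ↥(A ∪ B) → ↥A ⊕ ↥B := fun x =>
    if h : (x : Z) ∈ A then Sum.inl ⟨(x : Z), h⟩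
    else Sum.inr ⟨(x : Z), x.2.resolve_left h⟩ with hf
  set g : ↥A ⊕ ↥B → ↥(A ∪ B) :=
    Sum.elim (fun a => ⟨(a : Z), Or.inl a.2⟩) (fun b => ⟨(b : Z), Or.inr b.2⟩) with hg
  have hleft : Function.LeftInverse g f := by
    intro x
    by_cases h : (x : Z) ∈ A
    · simp only [hf, hg, dif_pos h, Sum.elim_inl]
    · simp only [hf, hg, dif_neg h, Sum.elim_inr]
  have hright : Function.RightInverse g f := by
    rintro (a | b)
    · simp only [hf, hg, Sum.elim_inl, dif_pos a.2]
    · have hb : (b : Z) ∉ A := fun h => hAB _ h b.2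
      simp only [hf, hg, Sum.elim_inr, dif_neg hb]
  have hcf : Continuous f := by
    rw [continuous_iff_isClosed]
    intro C hC
    have heq : f ⁻¹' C
        = Subtype.val ⁻¹' ((Subtype.val '' (Sum.inl ⁻¹' C : Set ↥A)) ∪
            (Subtype.val '' (Sum.inr ⁻¹' C : Set ↥B))) := by
      ext x
      simp only [Set.mem_preimage, Set.mem_union, Set.mem_image, hf]
      by_cases h : (x : Z) ∈ A
      · rw [dif_pos h]
        constructor
        · intro hC'
          exact Or.inl ⟨⟨(x : Z), h⟩, hC', rfl⟩
        · rintro (⟨a, ha, hax⟩ | ⟨b, hb, hbx⟩)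
          · have : a = (⟨(x : Z), h⟩ : ↥A) := Subtype.ext hax
            rwa [this] at ha
          · exact (hAB _ h (hbx ▸ b.2)).elim
      · rw [dif_neg h]
        have hxB : (x : Z) ∈ B := x.2.resolve_left h
        constructor
        · intro hC'
          exact Or.inr ⟨⟨(x : Z), hxB⟩, hC', rfl⟩
        · rintro (⟨a, ha, hax⟩ | ⟨b, hb, hbx⟩)
          · exact (h (hax ▸ a.2)).elim
          · have : b = (⟨(x : Z), hxB⟩ : ↥B) := Subtype.ext hbx
            rwa [this] at hb
    rw [heq]
    apply IsClosed.preimage continuous_subtype_val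
    apply IsClosed.union
    · exact hA.isClosedEmbedding_subtypeVal.isClosedMap _ (hC.preimage continuous_inl)
    · exact hB.isClosedEmbedding_subtypeVal.isClosedMap _ (hC.preimage continuous_inr)
  have hcg : Continuous g := by
    apply Continuous.sumElim
    · exact Continuous.subtype_mk continuous_subtype_val _
    · exact Continuous.subtype_mk continuous_subtype_val _
  exact ⟨⟨⟨f, g, hleft, hright⟩, hcf, hcg⟩⟩

noncomputable def toE : Vec 3 → EuclideanSpace ℝ (Fin 3) :=
  fun v => (EuclideanSpace.equiv (Fin 3) ℝ).symm v

noncomputable def fromE : EuclideanSpace ℝ (Fin 3) → Vec 3 :=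
  fun u => EuclideanSpace.equiv (Fin 3) ℝ u

lemma toE_fromE (u : EuclideanSpace ℝ (Fin 3)) : toE (fromE u) = u := by
  simp [toE, fromE]

lemma fromE_toE (v : Vec 3) : fromE (toE v) = v := by
  simp [toE, fromE]
  rfl

lemma cont_toE : Continuous toE := (EuclideanSpace.equiv (Fin 3) ℝ).symm.continuous

lemma cont_fromE : Continuous fromE := (EuclideanSpace.equiv (Fin 3) ℝ).continuous

lemma inner_toE (v w : Vec 3) : (inner ℝ (toE v) (toE w) : ℝ) = v ⬝ᵥ w := by
  simp [toE, PiLp.inner_apply, RCLike.inner_apply, dotProduct, mul_comm]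

lemma norm_toE (v : Vec 3) : ‖toE v‖ = Real.sqrt (v ⬝ᵥ v) := by
  rw [EuclideanSpace.norm_eq]
  congr 1
  simp [toE, dotProduct, Real.norm_eq_abs, sq_abs, Fin.sum_univ_three, sq]

lemma dot_self_pos {v : Vec 3} (hv : v ≠ 0) : 0 < v ⬝ᵥ v := by
  have h1 : 0 ≤ v ⬝ᵥ v := by
    simp only [dotProduct, Fin.sum_univ_three]
    nlinarith [mul_self_nonneg (v 0), mul_self_nonneg (v 1), mul_self_nonneg (v 2)]
  exact lt_of_le_of_ne h1 (Ne.symm (dot_self_ne hv))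

lemma piece_homeo (p : Vec 3) (hp : p ≠ 0) (c δ : ℝ) :
    Nonempty (↥(Sset c p δ) ≃ₜ
      ↥{y : EuclideanSpace ℝ (Fin 3) × EuclideanSpace ℝ (Fin 3) |
          ‖y.1‖ = 1 ∧ (inner ℝ y.1 y.2 : ℝ) = 0}) := by
  classical
  set n : ℝ := Real.sqrt (p ⬝ᵥ p) with hn
  have hpp : 0 < p ⬝ᵥ p := dot_self_pos hp
  have hn0 : 0 < n := Real.sqrt_pos.mpr hpp
  have hnn : n * n = p ⬝ᵥ p := Real.mul_self_sqrt hpp.le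
  have hne : n ≠ 0 := ne_of_gt hn0
  set f : ↥(Sset c p δ) →
      ↥{y : EuclideanSpace ℝ (Fin 3) × EuclideanSpace ℝ (Fin 3) |
          ‖y.1‖ = 1 ∧ (inner ℝ y.1 y.2 : ℝ) = 0} := fun x =>
    ⟨(toE (n⁻¹ • x.1.2), toE (ax x.1.1 - (δ * c) • x.1.2)), by
      obtain ⟨h1, h2, h3⟩ := x.2
      constructor
      · rw [norm_toE, smul_dotProduct, dotProduct_smul, h2,
          smul_eq_mul, smul_eq_mul]
        rw [show n⁻¹ * (n⁻¹ * (p ⬝ᵥ p)) = 1 by rw [← hnn]; field_simp]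
        exact Real.sqrt_one
      · rw [inner_toE, smul_dotProduct, dotProduct_sub,
          dotProduct_smul, dotProduct_comm _ (ax x.1.1), h3, h2,
          smul_eq_mul, smul_eq_mul]
        ring⟩ with hfdef
  set g : ↥{y : EuclideanSpace ℝ (Fin 3) × EuclideanSpace ℝ (Fin 3) |
          ‖y.1‖ = 1 ∧ (inner ℝ y.1 y.2 : ℝ) = 0} → ↥(Sset c p δ) := fun y =>
    ⟨(hat ((δ * c * n) • fromE y.1.1 + fromE y.1.2), n • fromE y.1.1), by
      obtain ⟨h1, h2⟩ := y.2
      have hu : fromE y.1.1 ⬝ᵥ fromE y.1.1 = 1 := by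
        rw [← inner_toE, toE_fromE]
        have : ‖y.1.1‖ ^ 2 = 1 := by rw [h1]; norm_num
        rwa [← real_inner_self_eq_norm_sq] at this
      have hw : fromE y.1.1 ⬝ᵥ fromE y.1.2 = 0 := by
        rw [← inner_toE, toE_fromE, toE_fromE]; exact h2
      refine ⟨by rw [ax_hat], ?_, ?_⟩
      · rw [smul_dotProduct, dotProduct_smul, hu, smul_eq_mul,
          smul_eq_mul]
        rw [← hnn]; ring
      · rw [ax_hat, add_dotProduct, smul_dotProduct,
          dotProduct_smul, dotProduct_smul, hu,
          dotProduct_comm _ (fromE y.1.1), hw]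
        simp only [smul_eq_mul]
        rw [← hnn]; ring⟩ with hgdef
  have hleft : Function.LeftInverse g f := by
    rintro ⟨⟨M, q⟩, hmem⟩
    obtain ⟨h1, h2, h3⟩ := hmem
    apply Subtype.ext
    simp only [hfdef, hgdef, fromE_toE]
    have e2 : n • (n⁻¹ • q) = q := by
      rw [smul_smul, mul_inv_cancel₀ hne, one_smul]
    have e1 : (δ * c * n) • (n⁻¹ • q) + (ax M - (δ * c) • q) = ax M := by
      rw [smul_smul, mul_assoc, mul_inv_cancel₀ hne, mul_one]
      abel
    rw [e1, e2, h1]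
  have hright : Function.RightInverse g f := by
    rintro ⟨⟨u, w⟩, hmem⟩
    apply Subtype.ext
    simp only [hfdef, hgdef, ax_hat]
    have e1 : n⁻¹ • (n • fromE u) = fromE u := by
      rw [smul_smul, inv_mul_cancel₀ hne, one_smul]
    have e2 : (δ * c * n) • fromE u + fromE w - (δ * c) • (n • fromE u)
        = fromE w := by
      rw [smul_smul]
      abel
    rw [e1, e2, toE_fromE, toE_fromE]
  have hcax : Continuous fun x : ↥(Sset c p δ) => ax x.1.1 := by
    apply continuous_pi
    intro i
    have base : ∀ a b : Fin 3, Continuous fun x : ↥(Sset c p δ) => x.1.1 a b := by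
      intro a b; fun_prop
    fin_cases i
    · simpa [ax] using base 2 1
    · simpa [ax] using base 0 2
    · simpa [ax] using base 1 0
  have hcf : Continuous f := by
    apply Continuous.subtype_mk
    apply Continuous.prodMk
    · exact cont_toE.comp ((continuous_subtype_val.snd).const_smul n⁻¹)
    · exact cont_toE.comp (hcax.sub ((continuous_subtype_val.snd).const_smul (δ * c)))
  have hchat : Continuous (hat : Vec 3 → Mat 3) := by
    apply continuous_pi
    intro i
    apply continuous_pi
    intro j
    fin_cases i <;> fin_cases j <;> simp [hat] <;>
      first
        | exact continuous_const
        | exact continuous_apply _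
        | exact (continuous_apply _).neg
  have hcg : Continuous g := by
    apply Continuous.subtype_mk
    have hcu : Continuous fun y : ↥{y : EuclideanSpace ℝ (Fin 3) × EuclideanSpace ℝ (Fin 3) |
          ‖y.1‖ = 1 ∧ (inner ℝ y.1 y.2 : ℝ) = 0} => fromE y.1.1 :=
      cont_fromE.comp (continuous_subtype_val.fst)
    have hcw : Continuous fun y : ↥{y : EuclideanSpace ℝ (Fin 3) × EuclideanSpace ℝ (Fin 3) |
          ‖y.1‖ = 1 ∧ (inner ℝ y.1 y.2 : ℝ) = 0} => fromE y.1.2 :=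
      cont_fromE.comp (continuous_subtype_val.snd)
    apply Continuous.prodMk
    · exact hchat.comp ((hcu.const_smul (δ * c * n)).add hcw)
    · exact hcu.const_smul n
  exact ⟨⟨⟨f, g, hleft, hright⟩, hcf, hcg⟩⟩

lemma decomp (L : Mat 3) (hL : IsSkew L) (p : Vec 3) (hLp : L *ᵥ p = 0)
    (hL0 : L ≠ 0) (hp : p ≠ 0) : ∃ c : ℝ, c ≠ 0 ∧ L = hat (c • p) := by
  set a := ax L with ha
  have hhat : hat a = L := hat_ax hL
  have hcr : cr a p = 0 := by rw [← hat_mulVec, hhat, hLp]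
  have hpp : p ⬝ᵥ p ≠ 0 := dot_self_ne hp
  set c := (a ⬝ᵥ p) / (p ⬝ᵥ p) with hc
  have hl : (a ⬝ᵥ a) * (p ⬝ᵥ p) = (a ⬝ᵥ p) ^ 2 := by
    have := lagrange a p
    rw [hcr] at this
    simp only [zero_dotProduct] at this
    linarith
  have key : (a - c • p) ⬝ᵥ (a - c • p) = 0 := by
    have expand : (a - c • p) ⬝ᵥ (a - c • p)
        = a ⬝ᵥ a - 2 * c * (a ⬝ᵥ p) + c ^ 2 * (p ⬝ᵥ p) := by
      simp only [sub_dotProduct, dotProduct_sub,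
        smul_dotProduct, dotProduct_smul, smul_eq_mul,
        dotProduct_comm p a]
      ring
    have scalar : ∀ A t s : ℝ, s ≠ 0 → A * s = t ^ 2 →
        A - 2 * (t / s) * t + (t / s) ^ 2 * s = 0 := by
      intro A t s hs h
      field_simp
      linear_combination h
    rw [expand, hc]
    exact scalar _ _ _ hpp hl
  have h0 : a - c • p = 0 := dotProduct_self_eq_zero.mp key
  have hac : a = c • p := by rwa [sub_eq_zero] at h0
  have hc0 : c ≠ 0 := by
    intro h
    rw [h, zero_smul] at hac
    apply hL0
    rw [← hhat, hac, hat_zero]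
  exact ⟨c, hc0, by rw [← hhat, hac]⟩

lemma disj (c : ℝ) (hc : c ≠ 0) (p : Vec 3) (hp : p ≠ 0) :
    ∀ z, z ∈ Sset c p 1 → z ∈ Sset c p (-1) → False := by
  rintro z ⟨-, -, h1⟩ ⟨-, -, h2⟩
  have hpp : p ⬝ᵥ p ≠ 0 := dot_self_ne hp
  have := mul_ne_zero hc hpp
  apply this
  linarith

end St19

open scoped RealInnerProductSpace in
theorem stmt19 (L : Mat 3) (hL : IsSkew L) (p : Vec 3) (hLp : L *ᵥ p = 0)
    (hL0 : L ≠ 0) (hp : p ≠ 0) :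
    Nonempty
      (({x : Mat 3 × Vec 3 | ∃ (r : Mat 3) (d : Vec 3), IsOrth r ∧ CoAd r d L p = x}) ≃ₜ
       (({y : EuclideanSpace ℝ (Fin 3) × EuclideanSpace ℝ (Fin 3) |
            ‖y.1‖ = 1 ∧ ⟪y.1, y.2⟫ = 0}) ⊕
        ({y : EuclideanSpace ℝ (Fin 3) × EuclideanSpace ℝ (Fin 3) |
            ‖y.1‖ = 1 ∧ ⟪y.1, y.2⟫ = 0}))) := by
  obtain ⟨c, hc0, hLc⟩ := St19.decomp L hL p hLp hL0 hp
  have horb : {x : Mat 3 × Vec 3 | ∃ (r : Mat 3) (d : Vec 3), IsOrth r ∧ CoAd r d L p = x}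
      = St19.Sset c p 1 ∪ St19.Sset c p (-1) := by
    rw [hLc]
    exact St19.orbit_eq p hp c
  obtain ⟨h1⟩ := St19.piece_homeo p hp c 1
  obtain ⟨h2⟩ := St19.piece_homeo p hp c (-1)
  obtain ⟨hu⟩ := St19.union_homeo (St19.Sset_closed c p 1) (St19.Sset_closed c p (-1))
    (St19.disj c hc0 p hp)
  exact ⟨(Homeomorph.setCongr horb).trans (hu.trans (Homeomorph.sumCongr h1 h2))⟩
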